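/- arXiv:1202.1377 — 3 statements merged into one kernel-verified Lean document; each statement's English description precedes it below -/
import Mathlib

section
/- For the Ridge regression estimator β̂ = β̂(λ) with regularization parameter λ > 0, assuming condition (minvar), the estimation bias satisfies max_{1≤j≤p} |E[β̂_j] − θ⁰_j| ≤ λ ‖θ⁰‖₂ λ_min≠0(Σ̂)⁻¹. -/
open MeasureTheory ProbabilityTheory Filter Matrix

noncomputable section

namespace PaperRidge

/-- Euclidean (ℓ₂) norm of a vector in `ℝᵖ`. -/
def l2norm {p : ℕ} (v : Fin p → ℝ) : ℝ := Real.sqrt (∑ j, v j ^ 2)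

/-- `Σ̂ = n⁻¹ Xᵀ X`. -/
def Sigmahat (n : ℕ) {p : ℕ} (X : Matrix (Fin n) (Fin p) ℝ) : Matrix (Fin p) (Fin p) ℝ :=
  ((n : ℝ))⁻¹ • (Xᵀ * X)

/-- `Ω(λ) = (Σ̂ + λ I)⁻¹ Σ̂ (Σ̂ + λ I)⁻¹`. -/
def OmegaM (n : ℕ) {p : ℕ} (X : Matrix (Fin n) (Fin p) ℝ) (lam : ℝ) :
    Matrix (Fin p) (Fin p) ℝ :=
  (Sigmahat n X + lam • (1 : Matrix (Fin p) (Fin p) ℝ))⁻¹ * Sigmahat n X *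
    (Sigmahat n X + lam • (1 : Matrix (Fin p) (Fin p) ℝ))⁻¹

/-- `Ω_min(λ) = min_j Ω(λ)_jj`. -/
def OmegaMin (n : ℕ) {p : ℕ} (X : Matrix (Fin n) (Fin p) ℝ) (lam : ℝ) : ℝ :=
  ⨅ j : Fin p, OmegaM n X lam j j

/-- The Ridge estimator `β̂(λ) = (Σ̂ + λ I)⁻¹ n⁻¹ Xᵀ Y`. -/
def ridge (n : ℕ) {p : ℕ} (X : Matrix (Fin n) (Fin p) ℝ) (lam : ℝ) (Y : Fin n → ℝ) :
    Fin p → ℝ :=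
  ((Sigmahat n X + lam • (1 : Matrix (Fin p) (Fin p) ℝ))⁻¹ *
    (((n : ℝ))⁻¹ • Xᵀ)).mulVec Y

/-- The row space `R(X) ⊆ ℝᵖ` of the design matrix `X`. -/
def rowSpace (n : ℕ) {p : ℕ} (X : Matrix (Fin n) (Fin p) ℝ) : Submodule ℝ (Fin p → ℝ) :=
  Submodule.span ℝ (Set.range fun i => X i)

/-- `P` is the matrix of the orthogonal projection of `ℝᵖ` onto the row space of `X`
(w.r.t. the standard inner product), i.e. `P = Xᵀ (X Xᵀ)⁻ X`. -/
def IsRowProjection (n : ℕ) {p : ℕ} (X : Matrix (Fin n) (Fin p) ℝ)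
    (P : Matrix (Fin p) (Fin p) ℝ) : Prop :=
  Pᵀ = P ∧ P * P = P ∧ (∀ v, P.mulVec v ∈ rowSpace n X) ∧
    ∀ v ∈ rowSpace n X, P.mulVec v = v

/-- `t = λ_min≠0(A)`, the smallest nonzero eigenvalue of `A`. -/
def IsSmallestNonzeroEigenvalue {p : ℕ} (A : Matrix (Fin p) (Fin p) ℝ) (t : ℝ) : Prop :=
  t ≠ 0 ∧ (∃ v, v ≠ 0 ∧ A.mulVec v = t • v) ∧
    ∀ s : ℝ, s ≠ 0 → (∃ v, v ≠ 0 ∧ A.mulVec v = s • v) → t ≤ s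

/-- The random vector `Z : Ω → ℝᵖ` has the multivariate Gaussian distribution
`N_p(mv, C)` under `μ` (characterized through all one-dimensional projections). -/
def IsGaussianVec {Ω : Type*} [MeasurableSpace Ω] (μ : Measure Ω) {p : ℕ}
    (Z : Ω → Fin p → ℝ) (mv : Fin p → ℝ) (C : Matrix (Fin p) (Fin p) ℝ) : Prop :=
  ∀ u : Fin p → ℝ,
    Measure.map (fun ω => ∑ j, u j * Z ω j) μ =
      gaussianReal (∑ j, u j * mv j)
        (Real.toNNReal (∑ j, ∑ k, u j * C j k * u k))

/-- The normalizing factors `a_{n,p;j}(σ) = n^{1/2} σ⁻¹ Ω(λ)_jj^{-1/2}`. -/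
def anp (n : ℕ) {p : ℕ} (X : Matrix (Fin n) (Fin p) ℝ) (lam σ : ℝ) (j : Fin p) : ℝ :=
  Real.sqrt (n : ℝ) * σ⁻¹ * (Real.sqrt (OmegaM n X lam j j))⁻¹

/-- The bias-corrected Ridge estimator
`β̂_corr;j = β̂_j - ∑_{k ≠ j} (P_X)_{jk} β̂_init;k`. -/
def corrRidge (n : ℕ) {p : ℕ} (X : Matrix (Fin n) (Fin p) ℝ) (lam : ℝ)
    (P : Matrix (Fin p) (Fin p) ℝ) (Y : Fin n → ℝ) (binit : Fin p → ℝ) (j : Fin p) : ℝ :=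
  ridge n X lam Y j - ∑ k ∈ Finset.univ.erase j, P j k * binit k

/-- The standard normal cumulative distribution function `Φ`. -/
def Phi (x : ℝ) : ℝ := ((gaussianReal 0 1) (Set.Iic x)).toReal

/-- The p-value `P_j = 2 (1 - Φ((a_j |β̂_corr;j| - Δ_j)₊))`. -/
def pvalOf (aj Δj bc : ℝ) : ℝ := 2 * (1 - Phi (max (aj * |bc| - Δj) 0))

/-- `max_{k ≠ j} f k`. -/
def maxOff {p : ℕ} (f : Fin p → ℝ) (j : Fin p) : ℝ :=
  ⨆ k : {k : Fin p // k ≠ j}, f k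

/-- The distribution function `F_Z(c) = P[min_j 2 (1 - Φ(a_j |Z_j|)) ≤ c]`. -/
def FZdist {Ω' : Type*} [MeasurableSpace Ω'] (ν : Measure Ω') {p : ℕ}
    (a : Fin p → ℝ) (Z : Ω' → Fin p → ℝ) (c : ℝ) : ℝ :=
  (ν {ω' | (⨅ j, 2 * (1 - Phi (a j * |Z ω' j|))) ≤ c}).toReal

/-- A generalized inverse `F_Z^{-1}(α)`. -/
def FZinv {Ω' : Type*} [MeasurableSpace Ω'] (ν : Measure Ω') {p : ℕ}
    (a : Fin p → ℝ) (Z : Ω' → Fin p → ℝ) (α : ℝ) : ℝ :=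
  sInf {c : ℝ | α ≤ FZdist ν a Z c}

/-- `J_G(c) = P[max_{j ∈ G} (a_j |Z_j| + Δ_j) ≤ c]`. -/
def JG {Ω' : Type*} [MeasurableSpace Ω'] (ν : Measure Ω') {p : ℕ}
    (a Δ : Fin p → ℝ) (Z : Ω' → Fin p → ℝ) (G : Finset (Fin p)) (hG : G.Nonempty)
    (c : ℝ) : ℝ :=
  (ν {ω' | G.sup' hG (fun j => a j * |Z ω' j| + Δ j) ≤ c}).toReal

lemma integrable_id_gaussianReal (v : NNReal) :
    Integrable (fun x : ℝ => x) (gaussianReal 0 v) := by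
  by_cases hv : v = 0
  · rw [hv, gaussianReal_zero_var]
    have hae : (fun x : ℝ => x) =ᵐ[Measure.dirac (0:ℝ)] (fun _ => (0:ℝ)) := by
      rw [MeasureTheory.ae_dirac_eq]; exact Filter.eventually_pure.mpr rfl
    exact (integrable_const (0:ℝ)).congr hae.symm
  · rw [gaussianReal_of_var_ne_zero 0 hv,
      integrable_withDensity_iff (measurable_gaussianPDF 0 v)
        (Filter.Eventually.of_forall fun x => ENNReal.ofReal_lt_top)]
    have hb : (0:ℝ) < (2*(v:ℝ))⁻¹ := by positivity
    have h := (integrable_mul_exp_neg_mul_sq hb).const_mul ((Real.sqrt (2*Real.pi*(v:ℝ)))⁻¹)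
    refine h.congr (Filter.Eventually.of_forall fun x => ?_)
    simp only [gaussianPDF]
    rw [ ENNReal.toReal_ofReal (gaussianPDFReal_nonneg _ _ _), gaussianPDFReal]
    have : -(2*(v:ℝ))⁻¹ * x^2 = -(x - 0)^2/(2*(v:ℝ)) := by field_simp; ring
    rw [this]; ring

lemma integral_id_gaussianReal0 (v : NNReal) : ∫ x, x ∂(gaussianReal 0 v) = 0 := by
  have hmap : (gaussianReal 0 v).map (fun x : ℝ => (-1 : ℝ) * x) = gaussianReal 0 v := by
    rw [show (fun x : ℝ => (-1:ℝ) * x) = ((-1:ℝ) * ·) from rfl, gaussianReal_map_const_mul]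
    norm_num
  have h1 : ∫ x, x ∂(gaussianReal 0 v) = ∫ x, (-1 : ℝ) * x ∂(gaussianReal 0 v) := by
    conv_lhs => rw [← hmap]
    rw [integral_map (μ := gaussianReal 0 v) (φ := fun x : ℝ => (-1:ℝ) * x)
      (f := fun x : ℝ => x) (by fun_prop) aestronglyMeasurable_id]
  rw [integral_const_mul] at h1
  linarith

lemma sum_dotProduct' {ι : Type*} {q : ℕ} (s : Finset ι) (g : ι → Fin q → ℝ) (v : Fin q → ℝ) :
    (∑ i ∈ s, g i) ⬝ᵥ v = ∑ i ∈ s, g i ⬝ᵥ v := by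
  unfold dotProduct
  simp only [Finset.sum_apply, Finset.sum_mul]
  rw [Finset.sum_comm]

theorem ridge_bias_bound
    {Ω : Type*} [MeasurableSpace Ω] (μ : Measure Ω)
    (hμ : IsProbabilityMeasure μ)
    (n p : ℕ) (hn : 0 < n) (hp : 0 < p)
    (X : Matrix (Fin n) (Fin p) ℝ) (β0 : Fin p → ℝ)
    (σ : ℝ) (hσ : 0 < σ)
    (ε : Ω → Fin n → ℝ) (hεm : ∀ i, Measurable fun ω => ε ω i)
    (hε : IsGaussianVec μ ε 0 (σ ^ 2 • (1 : Matrix (Fin n) (Fin n) ℝ)))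
    (lam : ℝ) (hlam : 0 < lam)
    (PX : Matrix (Fin p) (Fin p) ℝ) (hPX : IsRowProjection n X PX)
    (lmin : ℝ) (hlmin : IsSmallestNonzeroEigenvalue (Sigmahat n X) lmin)
    (hminvar : 0 < OmegaMin n X lam) :
    ∀ j : Fin p,
      |(∫ ω, ridge n X lam (X.mulVec β0 + ε ω) j ∂μ) - PX.mulVec β0 j| ≤
        lam * l2norm (PX.mulVec β0) * lmin⁻¹ := by
  intro j
  set S := Sigmahat n X with hSdef
  set A := S + lam • (1 : Matrix (Fin p) (Fin p) ℝ) with hAdef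
  set θ := PX.mulVec β0 with hθdef
  -- basic symmetry facts
  have hST : Sᵀ = S := by
    rw [hSdef]; unfold Sigmahat
    rw [Matrix.transpose_smul, Matrix.transpose_mul, Matrix.transpose_transpose]
  have hAT : Aᵀ = A := by
    rw [hAdef, Matrix.transpose_add, hST, Matrix.transpose_smul, Matrix.transpose_one]
  have hsym : ∀ (M : Matrix (Fin p) (Fin p) ℝ), Mᵀ = M →
      ∀ a b : Fin p → ℝ, (M *ᵥ a) ⬝ᵥ b = a ⬝ᵥ (M *ᵥ b) := by
    intro M hM a b
    have hMe : ∀ i k, M i k = M k i := by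
      intro i k
      conv_lhs => rw [← hM]
      rfl
    simp only [Matrix.mulVec, dotProduct, Finset.sum_mul, Finset.mul_sum]
    rw [Finset.sum_comm]
    refine Finset.sum_congr rfl fun i _ => Finset.sum_congr rfl fun k _ => ?_
    rw [hMe k i]
    ring
  -- quadratic form of S
  have hquad : ∀ v : Fin p → ℝ, v ⬝ᵥ (S *ᵥ v) = (n:ℝ)⁻¹ * ((X *ᵥ v) ⬝ᵥ (X *ᵥ v)) := by
    intro v
    rw [hSdef]; unfold Sigmahat
    rw [Matrix.smul_mulVec, dotProduct_smul, ← Matrix.mulVec_mulVec,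
      Matrix.dotProduct_mulVec v Xᵀ, Matrix.vecMul_transpose, smul_eq_mul]
  have hdotnn : ∀ {m : ℕ} (u : Fin m → ℝ), 0 ≤ u ⬝ᵥ u := by
    intro m u
    exact Finset.sum_nonneg fun i _ => mul_self_nonneg _
  have hquadnn : ∀ v : Fin p → ℝ, 0 ≤ v ⬝ᵥ (S *ᵥ v) := by
    intro v
    rw [hquad]
    exact mul_nonneg (by positivity) (hdotnn _)
  -- kernel facts
  have hkerX : ∀ v : Fin p → ℝ, S *ᵥ v = 0 → X *ᵥ v = 0 := by
    intro v hv
    have h1 : (0:ℝ) = (n:ℝ)⁻¹ * ((X *ᵥ v) ⬝ᵥ (X *ᵥ v)) := by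
      rw [← hquad, hv, dotProduct_zero]
    have hn' : ((n:ℝ))⁻¹ ≠ 0 := by positivity
    have h2 : (X *ᵥ v) ⬝ᵥ (X *ᵥ v) = 0 := by
      field_simp at h1; linarith
    exact dotProduct_self_eq_zero.mp h2
  have hθrow : θ ∈ rowSpace n X := hPX.2.2.1 β0
  have hθker : ∀ v : Fin p → ℝ, S *ᵥ v = 0 → θ ⬝ᵥ v = 0 := by
    intro v hv
    have hXv := hkerX v hv
    have hgen : ∀ u ∈ rowSpace n X, u ⬝ᵥ v = 0 := by
      intro u hu
      refine Submodule.span_induction ?_ ?_ ?_ ?_ hu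
      · rintro x ⟨i, rfl⟩
        have : (X *ᵥ v) i = 0 := by rw [hXv]; rfl
        simpa [Matrix.mulVec, dotProduct] using this
      · simp
      · intro x y _ _ hx hy
        rw [add_dotProduct, hx, hy, add_zero]
      · intro a x _ hx
        rw [smul_dotProduct, hx, smul_zero]
    exact hgen θ hθrow
  -- invertibility of A
  have hAdet : IsUnit A.det := by
    rw [isUnit_iff_ne_zero]
    intro h0
    obtain ⟨v, hv0, hAv⟩ := (Matrix.exists_mulVec_eq_zero_iff).mpr h0
    have h1 : v ⬝ᵥ (A *ᵥ v) = 0 := by rw [hAv, dotProduct_zero]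
    have h2 : v ⬝ᵥ (A *ᵥ v) = v ⬝ᵥ (S *ᵥ v) + lam * (v ⬝ᵥ v) := by
      rw [hAdef, Matrix.add_mulVec, dotProduct_add, Matrix.smul_mulVec,
        Matrix.one_mulVec, dotProduct_smul, smul_eq_mul]
    have h3 : 0 < v ⬝ᵥ v :=
      lt_of_le_of_ne (hdotnn v) fun h => hv0 (dotProduct_self_eq_zero.mp h.symm)
    nlinarith [hquadnn v]
  have hAiA : A⁻¹ * A = 1 := Matrix.nonsing_inv_mul A hAdet
  have hAAi : A * A⁻¹ = 1 := Matrix.mul_nonsing_inv A hAdet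
  have hAiT : (A⁻¹)ᵀ = A⁻¹ := by rw [Matrix.transpose_nonsing_inv, hAT]
  set w := A⁻¹ *ᵥ θ with hwdef
  have hAw : A *ᵥ w = θ := by
    rw [hwdef, Matrix.mulVec_mulVec, hAAi, Matrix.one_mulVec]
  have hwker : ∀ v : Fin p → ℝ, S *ᵥ v = 0 → w ⬝ᵥ v = 0 := by
    intro v hv
    have hAv : A *ᵥ v = lam • v := by
      rw [hAdef, Matrix.add_mulVec, hv, zero_add, Matrix.smul_mulVec, Matrix.one_mulVec]
    have hAiv : A⁻¹ *ᵥ v = lam⁻¹ • v := by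
      have h1 : A⁻¹ *ᵥ (A *ᵥ v) = v := by
        rw [Matrix.mulVec_mulVec, hAiA, Matrix.one_mulVec]
      rw [hAv, Matrix.mulVec_smul] at h1
      have h2 : lam⁻¹ • (lam • (A⁻¹ *ᵥ v)) = lam⁻¹ • v := by rw [h1]
      rwa [smul_smul, inv_mul_cancel₀ hlam.ne', one_smul] at h2
    rw [hwdef, hsym A⁻¹ hAiT θ v, hAiv, dotProduct_smul, smul_eq_mul,
      hθker v hv, mul_zero]
  -- lmin > 0
  have hlminpos : 0 < lmin := by
    obtain ⟨v, hv0, hveq⟩ := hlmin.2.1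
    have h1 : 0 ≤ v ⬝ᵥ (S *ᵥ v) := hquadnn v
    have h2 : v ⬝ᵥ (S *ᵥ v) = lmin * (v ⬝ᵥ v) := by
      rw [hveq, dotProduct_smul, smul_eq_mul]
    have h3 : 0 < v ⬝ᵥ v :=
      lt_of_le_of_ne (hdotnn v) fun h => hv0 (dotProduct_self_eq_zero.mp h.symm)
    have h4 : 0 ≤ lmin := by nlinarith
    exact lt_of_le_of_ne h4 (Ne.symm hlmin.1)
  -- spectral decomposition of S
  have hSh : S.IsHermitian := by
    show Sᴴ = S
    have h1 : Sᴴ = Sᵀ := by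
      ext i k
      simp [Matrix.conjTranspose_apply]
    rw [h1, hST]
  set B := hSh.eigenvectorBasis with hBdef
  set d := hSh.eigenvalues with hddef
  have heig : ∀ i, S *ᵥ ⇑(B i) = d i • ⇑(B i) := fun i => hSh.mulVec_eigenvectorBasis i
  have hBdot : ∀ i k : Fin p, (⇑(B i)) ⬝ᵥ (⇑(B k)) = if i = k then 1 else 0 := by
    intro i k
    have h := B.orthonormal
    rw [orthonormal_iff_ite] at h
    have h2 := h i k
    simp [PiLp.inner_apply, RCLike.inner_apply, conj_trivial] at h2
    rw [← h2, dotProduct]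
    exact Finset.sum_congr rfl fun x _ => mul_comm _ _
  set c : Fin p → ℝ := fun i => (⇑(B i)) ⬝ᵥ w with hcdef
  have hw : w = ∑ i, c i • ⇑(B i) := by
    have h := (B.sum_repr' (WithLp.toLp 2 w)).symm
    have h2 : w = ∑ i, (inner ℝ (B i) (WithLp.toLp 2 w) : ℝ) • ⇑(B i) := by
      have h' := congrArg WithLp.ofLp h
      rw [WithLp.ofLp_sum] at h'
      simpa only [WithLp.ofLp_smul, WithLp.ofLp_toLp] using h'
    rw [h2]
    refine Finset.sum_congr rfl fun i _ => ?_
    have h3 : (inner ℝ (B i) (WithLp.toLp 2 w) : ℝ) = c i := by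
      simp only [hcdef, PiLp.inner_apply, RCLike.inner_apply, conj_trivial, dotProduct,
        WithLp.ofLp_toLp]
      exact Finset.sum_congr rfl fun x _ => mul_comm _ _
    rw [h3]
  have hww : w ⬝ᵥ w = ∑ i, c i * c i := by
    calc w ⬝ᵥ w = (∑ i, c i • ⇑(B i)) ⬝ᵥ w := by rw [← hw]
      _ = ∑ i, c i * c i := by
          rw [sum_dotProduct']
          exact Finset.sum_congr rfl fun i _ => by
            rw [smul_dotProduct, smul_eq_mul]
  have hwSw : w ⬝ᵥ (S *ᵥ w) = ∑ i, c i * (d i * c i) := by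
    calc w ⬝ᵥ (S *ᵥ w) = (∑ i, c i • ⇑(B i)) ⬝ᵥ (S *ᵥ w) := by rw [← hw]
      _ = ∑ i, c i * (d i * c i) := by
          rw [sum_dotProduct']
          refine Finset.sum_congr rfl fun i _ => ?_
          rw [smul_dotProduct, smul_eq_mul, ← hsym S hST (⇑(B i)) w, heig i,
            smul_dotProduct, smul_eq_mul]
  -- termwise bound
  have hterm : ∀ i : Fin p, lmin * (c i * c i) ≤ c i * (d i * c i) := by
    intro i
    by_cases hdi : d i = 0
    · have hci : c i = 0 := by
        have hker : S *ᵥ ⇑(B i) = 0 := by rw [heig i, hdi, zero_smul]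
        rw [hcdef]
        simpa [dotProduct_comm] using hwker _ hker
      simp [hci]
    · have hBne : (⇑(B i) : Fin p → ℝ) ≠ 0 := by
        intro h0
        have := hBdot i i
        rw [h0] at this
        simp at this
      have hle : lmin ≤ d i := hlmin.2.2 (d i) hdi ⟨⇑(B i), hBne, heig i⟩
      nlinarith [mul_self_nonneg (c i)]
  have hkey : lmin * (w ⬝ᵥ w) ≤ w ⬝ᵥ (S *ᵥ w) := by
    rw [hww, hwSw, Finset.mul_sum]
    exact Finset.sum_le_sum fun i _ => hterm i
  -- Cauchy-Schwarz
  have hCS : w ⬝ᵥ θ ≤ Real.sqrt (w ⬝ᵥ w) * Real.sqrt (θ ⬝ᵥ θ) := by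
    have h := Finset.sum_mul_sq_le_sq_mul_sq Finset.univ (fun i => w i) (fun i => θ i)
    have h1 : w ⬝ᵥ θ ≤ |w ⬝ᵥ θ| := le_abs_self _
    have h2 : |w ⬝ᵥ θ| = Real.sqrt ((w ⬝ᵥ θ)^2) := (Real.sqrt_sq_eq_abs _).symm
    have h3 : (w ⬝ᵥ θ)^2 ≤ (w ⬝ᵥ w) * (θ ⬝ᵥ θ) := by
      have e1 : w ⬝ᵥ θ = ∑ i, w i * θ i := rfl
      have e2 : w ⬝ᵥ w = ∑ i, w i ^ 2 := by
        unfold dotProduct; exact Finset.sum_congr rfl fun i _ => (sq (w i)).symm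
      have e3 : θ ⬝ᵥ θ = ∑ i, θ i ^ 2 := by
        unfold dotProduct; exact Finset.sum_congr rfl fun i _ => (sq (θ i)).symm
      rw [e1, e2, e3]; exact h
    calc w ⬝ᵥ θ ≤ Real.sqrt ((w ⬝ᵥ θ)^2) := by rw [← h2]; exact h1
      _ ≤ Real.sqrt ((w ⬝ᵥ w) * (θ ⬝ᵥ θ)) := Real.sqrt_le_sqrt h3
      _ = Real.sqrt (w ⬝ᵥ w) * Real.sqrt (θ ⬝ᵥ θ) := Real.sqrt_mul (hdotnn w) _
  -- main norm bound
  have hl2 : l2norm θ = Real.sqrt (θ ⬝ᵥ θ) := by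
    unfold l2norm
    congr 1
    unfold dotProduct
    exact Finset.sum_congr rfl fun i _ => sq (θ i)
  have hwA : w ⬝ᵥ θ = w ⬝ᵥ (S *ᵥ w) + lam * (w ⬝ᵥ w) := by
    conv_lhs => rw [← hAw]
    rw [hAdef, Matrix.add_mulVec, dotProduct_add, Matrix.smul_mulVec,
      Matrix.one_mulVec, dotProduct_smul, smul_eq_mul]
  have hsw : lmin * Real.sqrt (w ⬝ᵥ w) ≤ Real.sqrt (θ ⬝ᵥ θ) := by
    set sW := Real.sqrt (w ⬝ᵥ w) with hsWdef
    have hsWnn : 0 ≤ sW := Real.sqrt_nonneg _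
    have hW : w ⬝ᵥ w = sW ^ 2 := (Real.sq_sqrt (hdotnn w)).symm
    have h1 : lmin * sW ^ 2 ≤ sW * Real.sqrt (θ ⬝ᵥ θ) := by
      calc lmin * sW ^ 2 = lmin * (w ⬝ᵥ w) := by rw [hW]
        _ ≤ w ⬝ᵥ (S *ᵥ w) := hkey
        _ ≤ w ⬝ᵥ (S *ᵥ w) + lam * (w ⬝ᵥ w) := by nlinarith [hdotnn w]
        _ = w ⬝ᵥ θ := hwA.symm
        _ ≤ sW * Real.sqrt (θ ⬝ᵥ θ) := hCS
    rcases eq_or_lt_of_le hsWnn with h | h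
    · rw [← h, mul_zero]; exact Real.sqrt_nonneg _
    · nlinarith
  have hwj : |w j| ≤ Real.sqrt (w ⬝ᵥ w) := by
    have h1 : w j * w j ≤ w ⬝ᵥ w := by
      unfold dotProduct
      exact Finset.single_le_sum (fun i _ => mul_self_nonneg (w i)) (Finset.mem_univ j)
    calc |w j| = Real.sqrt (w j * w j) := by rw [← Real.sqrt_mul_self_eq_abs]
      _ ≤ Real.sqrt (w ⬝ᵥ w) := Real.sqrt_le_sqrt h1
  have hwjbound : |w j| ≤ l2norm θ * lmin⁻¹ := by
    rw [hl2]
    have h1 : lmin * |w j| ≤ Real.sqrt (θ ⬝ᵥ θ) :=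
      le_trans (mul_le_mul_of_nonneg_left hwj hlminpos.le) hsw
    calc |w j| = lmin⁻¹ * (lmin * |w j|) := by field_simp
      _ ≤ lmin⁻¹ * Real.sqrt (θ ⬝ᵥ θ) := mul_le_mul_of_nonneg_left h1 (inv_nonneg.mpr hlminpos.le)
      _ = Real.sqrt (θ ⬝ᵥ θ) * lmin⁻¹ := mul_comm _ _
  -- expectation computation
  set M := A⁻¹ * (((n:ℝ))⁻¹ • Xᵀ) with hMdef
  have hXθ : X *ᵥ θ = X *ᵥ β0 := by
    funext i
    have hXirow : (X i) ∈ rowSpace n X := Submodule.subset_span ⟨i, rfl⟩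
    have h1 : (X *ᵥ θ) i = X i ⬝ᵥ (PX *ᵥ β0) := rfl
    have h2 : X i ⬝ᵥ (PX *ᵥ β0) = (PX *ᵥ (X i)) ⬝ᵥ β0 := by
      rw [Matrix.dotProduct_mulVec]
      congr 1
      conv_lhs => rw [← hPX.1, Matrix.vecMul_transpose]
    rw [h1, h2, hPX.2.2.2 (X i) hXirow]
    rfl
  have hSθ : S *ᵥ θ = S *ᵥ β0 := by
    have e : ∀ v : Fin p → ℝ, S *ᵥ v = (n:ℝ)⁻¹ • (Xᵀ *ᵥ (X *ᵥ v)) := by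
      intro v
      rw [hSdef]; unfold Sigmahat
      rw [Matrix.smul_mulVec, Matrix.mulVec_mulVec]
    rw [e, e, hXθ]
  have hridge : ∀ ω, ridge n X lam (X *ᵥ β0 + ε ω) j =
      ((A⁻¹ * S) *ᵥ θ) j + ∑ i, M j i * ε ω i := by
    intro ω
    unfold ridge
    rw [← hSdef, ← hAdef, ← hMdef, Matrix.mulVec_add, Pi.add_apply]
    have hMX : M * X = A⁻¹ * S := by
      rw [hMdef, Matrix.mul_assoc, Matrix.smul_mul]
      rw [hSdef]; rfl
    have h1 : (M *ᵥ (X *ᵥ β0)) j = ((A⁻¹ * S) *ᵥ θ) j := by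
      rw [Matrix.mulVec_mulVec, hMX, ← Matrix.mulVec_mulVec, ← hSθ, Matrix.mulVec_mulVec]
    have h2 : (M *ᵥ (ε ω)) j = ∑ i, M j i * ε ω i := by
      simp [Matrix.mulVec, dotProduct]
    rw [h1, h2]
  set f : Ω → ℝ := fun ω => ∑ i, M j i * ε ω i with hfdef
  have hfmeas : Measurable f := by
    apply Finset.measurable_sum
    intro i _
    exact (hεm i).const_mul _
  have hmapf := hε (M j)
  simp only [Pi.zero_apply, mul_zero, Finset.sum_const_zero] at hmapf
  set v' := Real.toNNReal (∑ i, ∑ k, M j i * (σ ^ 2 • (1 : Matrix (Fin n) (Fin n) ℝ)) i k * M j k)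
    with hv'def
  have hint : Integrable f μ := by
    have h1 := integrable_id_gaussianReal v'
    rw [← hmapf] at h1
    exact (integrable_map_measure aestronglyMeasurable_id hfmeas.aemeasurable).mp h1
  have hf0 : ∫ ω, f ω ∂μ = 0 := by
    have h1 : ∫ ω, f ω ∂μ = ∫ x, x ∂(Measure.map f μ) :=
      (integral_map (μ := μ) (φ := f) (f := fun x : ℝ => x)
        hfmeas.aemeasurable aestronglyMeasurable_id).symm
    rw [h1, hmapf, integral_id_gaussianReal0]
  have hE : (∫ ω, ridge n X lam (X *ᵥ β0 + ε ω) j ∂μ) = ((A⁻¹ * S) *ᵥ θ) j := by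
    calc (∫ ω, ridge n X lam (X *ᵥ β0 + ε ω) j ∂μ)
        = ∫ ω, (((A⁻¹ * S) *ᵥ θ) j + f ω) ∂μ := by
          refine integral_congr_ae (Filter.Eventually.of_forall fun ω => ?_)
          exact hridge ω
      _ = (∫ _, ((A⁻¹ * S) *ᵥ θ) j ∂μ) + ∫ ω, f ω ∂μ := integral_add (integrable_const _) hint
      _ = ((A⁻¹ * S) *ᵥ θ) j := by
          rw [hf0, add_zero, integral_const, probReal_univ, one_smul]
  -- final algebra
  have halg : (A⁻¹ * S) *ᵥ θ = θ - lam • w := by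
    have h1 : S *ᵥ θ = A *ᵥ θ - lam • θ := by
      rw [hAdef, Matrix.add_mulVec, Matrix.smul_mulVec, Matrix.one_mulVec,
        add_sub_cancel_right]
    rw [← Matrix.mulVec_mulVec, h1, Matrix.mulVec_sub, Matrix.mulVec_mulVec, hAiA,
      Matrix.one_mulVec, Matrix.mulVec_smul, ← hwdef]
  rw [hE, halg]
  have hval : (θ - lam • w) j - θ j = -(lam * w j) := by
    simp only [Pi.sub_apply, Pi.smul_apply, smul_eq_mul]
    ring
  rw [hval, abs_neg, abs_mul, abs_of_pos hlam]
  calc lam * |w j| ≤ lam * (l2norm θ * lmin⁻¹) :=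
        mul_le_mul_of_nonneg_left hwjbound hlam.le
    _ = lam * l2norm θ * lmin⁻¹ := by ring

end PaperRidge
end
end

section
/- If condition (minvar) holds, then for any 0 < C < ∞ there exist constants 0 < L_C ≤ M_C < ∞, depending only on C and the design matrix X, such that L_C ≤ Ω_min(λ) ≤ M_C for all λ ∈ (0, C]; in particular inf_{λ∈(0,C]} Ω_min(λ) > 0 and sup_{λ∈(0,C]} Ω_min(λ) < ∞. -/
open MeasureTheory ProbabilityTheory Filter Matrix

noncomputable section

namespace PaperRidge

section AuxOmega

variable {n p : ℕ}

lemma sandwich_mul (V : Matrix (Fin p) (Fin n) ℝ) (hV : Vᵀ * V = 1)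
    (f g : Fin n → ℝ) :
    (V * Matrix.diagonal f * Vᵀ) * (V * Matrix.diagonal g * Vᵀ)
      = V * Matrix.diagonal (fun k => f k * g k) * Vᵀ := by
  calc (V * Matrix.diagonal f * Vᵀ) * (V * Matrix.diagonal g * Vᵀ)
      = V * Matrix.diagonal f * (Vᵀ * V) * Matrix.diagonal g * Vᵀ := by
        simp only [Matrix.mul_assoc]
    _ = V * (Matrix.diagonal f * Matrix.diagonal g) * Vᵀ := by
        rw [hV, Matrix.mul_one]; simp only [Matrix.mul_assoc]
    _ = V * Matrix.diagonal (fun k => f k * g k) * Vᵀ := by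
        rw [Matrix.diagonal_mul_diagonal]

lemma sandwich_smul (V : Matrix (Fin p) (Fin n) ℝ) (c : ℝ) (f : Fin n → ℝ) :
    c • (V * Matrix.diagonal f * Vᵀ) = V * Matrix.diagonal (fun k => c * f k) * Vᵀ := by
  have : Matrix.diagonal (fun k => c * f k) = c • Matrix.diagonal f := by
    rw [← Matrix.diagonal_smul]; rfl
  rw [this, Matrix.mul_smul, Matrix.smul_mul]

lemma sandwich_add (V : Matrix (Fin p) (Fin n) ℝ) (f g : Fin n → ℝ) :
    V * Matrix.diagonal f * Vᵀ + V * Matrix.diagonal g * Vᵀ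
      = V * Matrix.diagonal (fun k => f k + g k) * Vᵀ := by
  have : Matrix.diagonal (fun k => f k + g k)
      = Matrix.diagonal f + Matrix.diagonal g := by
    rw [← Matrix.diagonal_add]
  rw [this, Matrix.mul_add, Matrix.add_mul]

lemma sandwich_apply (V : Matrix (Fin p) (Fin n) ℝ) (f : Fin n → ℝ) (j : Fin p) :
    (V * Matrix.diagonal f * Vᵀ) j j = ∑ k, f k * V j k ^ 2 := by
  rw [Matrix.mul_apply]
  refine Finset.sum_congr rfl fun k _ => ?_
  rw [Matrix.mul_diagonal, Matrix.transpose_apply]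
  ring

lemma Sigmahat_eq (X : Matrix (Fin n) (Fin p) ℝ)
    (R : Matrix (Fin n) (Fin n) ℝ) (s : Fin n → ℝ) (V : Matrix (Fin p) (Fin n) ℝ)
    (hR : Rᵀ * R = 1)
    (hSVD : X = R * Matrix.diagonal s * Vᵀ) :
    Sigmahat n X = V * Matrix.diagonal (fun k => s k ^ 2 / n) * Vᵀ := by
  have hXT : Xᵀ = V * Matrix.diagonal s * Rᵀ := by
    rw [hSVD]
    simp [Matrix.transpose_mul, Matrix.diagonal_transpose, Matrix.mul_assoc]
  have hXX : Xᵀ * X = V * Matrix.diagonal (fun k => s k * s k) * Vᵀ := by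
    rw [hXT, hSVD]
    calc V * Matrix.diagonal s * Rᵀ * (R * Matrix.diagonal s * Vᵀ)
        = V * Matrix.diagonal s * (Rᵀ * R) * Matrix.diagonal s * Vᵀ := by
          simp only [Matrix.mul_assoc]
      _ = V * (Matrix.diagonal s * Matrix.diagonal s) * Vᵀ := by
          rw [hR, Matrix.mul_one]; simp only [Matrix.mul_assoc]
      _ = V * Matrix.diagonal (fun k => s k * s k) * Vᵀ := by
          rw [Matrix.diagonal_mul_diagonal]
  rw [Sigmahat, hXX, sandwich_smul]
  have : (fun k => (n:ℝ)⁻¹ * (s k * s k)) = fun k => s k ^ 2 / (n:ℝ) := by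
    funext k; ring
  rw [this]

lemma OmegaM_eq (hn : 0 < n) (X : Matrix (Fin n) (Fin p) ℝ)
    (R : Matrix (Fin n) (Fin n) ℝ) (s : Fin n → ℝ) (V : Matrix (Fin p) (Fin n) ℝ)
    (hR : Rᵀ * R = 1) (hV : Vᵀ * V = 1)
    (hSVD : X = R * Matrix.diagonal s * Vᵀ)
    (lam : ℝ) (hlam : 0 < lam) :
    OmegaM n X lam
      = V * Matrix.diagonal
          (fun k => (s k ^ 2 / n) / (s k ^ 2 / n + lam) ^ 2) * Vᵀ := by
  set d : Fin n → ℝ := fun k => s k ^ 2 / n with hd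
  have hd0 : ∀ k, 0 ≤ d k := fun k => by positivity
  have hdl : ∀ k, d k + lam ≠ 0 := fun k => by positivity
  have hlam' : lam ≠ 0 := ne_of_gt hlam
  have hSig : Sigmahat n X = V * Matrix.diagonal d * Vᵀ :=
    Sigmahat_eq X R s V hR hSVD
  set e : Fin n → ℝ := fun k => (d k + lam)⁻¹ - lam⁻¹ with he
  set A : Matrix (Fin p) (Fin p) ℝ :=
    Sigmahat n X + lam • (1 : Matrix (Fin p) (Fin p) ℝ) with hA
  set B : Matrix (Fin p) (Fin p) ℝ :=
    V * Matrix.diagonal e * Vᵀ + lam⁻¹ • (1 : Matrix (Fin p) (Fin p) ℝ) with hB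
  have hAB : A * B = 1 := by
    rw [hA, hB, hSig]
    rw [Matrix.add_mul, Matrix.mul_add, Matrix.mul_add]
    rw [sandwich_mul V hV]
    rw [Matrix.mul_smul, Matrix.mul_one, sandwich_smul]
    rw [Matrix.smul_mul, Matrix.smul_mul, Matrix.one_mul, sandwich_smul]
    simp only [Matrix.one_mul, smul_smul, mul_inv_cancel₀ hlam', one_smul]
    rw [add_assoc, ← add_assoc (V * Matrix.diagonal (fun k => lam⁻¹ * d k) * Vᵀ),
      sandwich_add, ← add_assoc, sandwich_add]
    have hzero : (fun k => d k * e k + (lam⁻¹ * d k + lam * e k)) = fun _ => (0 : ℝ) := by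
      funext k
      rw [he]
      have h1 : d k + lam ≠ 0 := hdl k
      field_simp
      ring
    rw [hzero]
    simp
  have hinv : A⁻¹ = B := Matrix.inv_eq_right_inv hAB
  have hBS : B * Sigmahat n X
      = V * Matrix.diagonal (fun k => e k * d k + lam⁻¹ * d k) * Vᵀ := by
    rw [hB, hSig, Matrix.add_mul, sandwich_mul V hV, Matrix.smul_mul, Matrix.one_mul,
      sandwich_smul, sandwich_add]
  have : OmegaM n X lam = B * Sigmahat n X * B := by
    rw [OmegaM, ← hA, hinv]
  rw [this, hBS, hB, Matrix.mul_add, sandwich_mul V hV, Matrix.mul_smul,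
    Matrix.mul_one, sandwich_smul, sandwich_add]
  have hfun : (fun k => (e k * d k + lam⁻¹ * d k) * e k + lam⁻¹ * (e k * d k + lam⁻¹ * d k))
      = fun k => (s k ^ 2 / n) / (s k ^ 2 / n + lam) ^ 2 := by
    funext k
    have h1 : d k + lam ≠ 0 := hdl k
    rw [he]
    simp only
    rw [show s k ^ 2 / (n:ℝ) = d k from rfl]
    field_simp
    ring
  rw [hfun]

end AuxOmega

theorem OmegaMin_bounded_on_interval
    (n p : ℕ) (hn : 0 < n) (hp : 0 < p)
    (X : Matrix (Fin n) (Fin p) ℝ)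
    (R : Matrix (Fin n) (Fin n) ℝ) (s : Fin n → ℝ) (V : Matrix (Fin p) (Fin n) ℝ)
    (hR : Rᵀ * R = 1) (hV : Vᵀ * V = 1)
    (hSVD : X = R * Matrix.diagonal s * Vᵀ)
    (hminvar : ∀ lam > (0 : ℝ), 0 < OmegaMin n X lam)
    (C : ℝ) (hC : 0 < C) :
    ∃ L M : ℝ, 0 < L ∧ L ≤ M ∧
      ∀ lam : ℝ, 0 < lam → lam ≤ C →
        L ≤ OmegaMin n X lam ∧ OmegaMin n X lam ≤ M := by
  haveI : Nonempty (Fin p) := ⟨⟨0, hp⟩⟩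
  set d : Fin n → ℝ := fun k => s k ^ 2 / n with hd
  have hd0 : ∀ k, 0 ≤ d k := fun k => by positivity
  have hdiag : ∀ lam : ℝ, 0 < lam → ∀ j : Fin p,
      OmegaM n X lam j j = ∑ k, (d k / (d k + lam) ^ 2) * V j k ^ 2 := by
    intro lam hlam j
    rw [OmegaM_eq hn X R s V hR hV hSVD lam hlam, sandwich_apply]
  -- monotonicity of the diagonal entries
  have hmono : ∀ l1 l2 : ℝ, 0 < l1 → l1 ≤ l2 → ∀ j : Fin p,
      OmegaM n X l2 j j ≤ OmegaM n X l1 j j := by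
    intro l1 l2 h1 h12 j
    rw [hdiag l1 h1 j, hdiag l2 (lt_of_lt_of_le h1 h12) j]
    apply Finset.sum_le_sum
    intro k _
    have hv : (0:ℝ) ≤ V j k ^ 2 := sq_nonneg _
    apply mul_le_mul_of_nonneg_right _ hv
    have h1' : 0 < d k + l1 := by have := hd0 k; linarith
    gcongr
  -- uniform upper bound on diagonal entries
  set g : Fin n → ℝ := fun k => if d k = 0 then 0 else (d k)⁻¹ with hg
  have hbound : ∀ lam : ℝ, 0 < lam → ∀ j : Fin p,
      OmegaM n X lam j j ≤ ∑ k, g k * V j k ^ 2 := by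
    intro lam hlam j
    rw [hdiag lam hlam j]
    apply Finset.sum_le_sum
    intro k _
    apply mul_le_mul_of_nonneg_right _ (sq_nonneg _)
    by_cases hk : d k = 0
    · simp [hg, hk]
    · have hkpos : 0 < d k := lt_of_le_of_ne (hd0 k) (Ne.symm hk)
      simp only [hg, if_neg hk]
      rw [inv_eq_one_div]
      rw [div_le_div_iff₀ (by positivity) hkpos]
      have : d k * d k ≤ (d k + lam) ^ 2 := by nlinarith
      nlinarith
  set j0 : Fin p := ⟨0, hp⟩ with hj0
  have hbdd : ∀ lam : ℝ, BddBelow (Set.range fun j : Fin p => OmegaM n X lam j j) :=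
    fun lam => Set.Finite.bddBelow (Set.finite_range _)
  refine ⟨OmegaMin n X C, ∑ k, g k * V j0 k ^ 2, hminvar C hC, ?_, ?_⟩
  · calc OmegaMin n X C ≤ OmegaM n X C j0 j0 := ciInf_le (hbdd C) j0
      _ ≤ ∑ k, g k * V j0 k ^ 2 := hbound C hC j0
  · intro lam hlam hlamC
    constructor
    · apply le_ciInf
      intro j
      calc OmegaMin n X C ≤ OmegaM n X C j j := ciInf_le (hbdd C) j
        _ ≤ OmegaM n X lam j j := hmono lam C hlam hlamC j
    · calc OmegaMin n X lam ≤ OmegaM n X lam j0 j0 := ciInf_le (hbdd lam) j0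
        _ ≤ ∑ k, g k * V j0 k ^ 2 := hbound lam hlam j0

end PaperRidge
end
end

section
/- Assume the linear model with Gaussian errors and condition (minvar), and let λ > 0. Then the bias-corrected Ridge estimator admits the representation β̂_corr;j = Z_j + γ_j for j = 1,…,p, where Z_j := β̂_j − E[β̂_j], the vector (Z₁,…,Z_p) is distributed as N_p(0, n⁻¹σ²Ω(λ)), and γ_j = (P_X)_{jj}β⁰_j − Σ_{k≠j}(P_X)_{jk}(β̂_init;k − β⁰_k) + b_j(λ) with b_j(λ) = E[β̂_j(λ)] − θ⁰_j. -/
open MeasureTheory ProbabilityTheory Filter Matrix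

noncomputable section

namespace PaperRidge

lemma integrable_id_gaussianReal' (m : ℝ) (v : NNReal) :
    Integrable (id : ℝ → ℝ) (gaussianReal m v) := by
  by_cases hv : v = 0
  · subst hv
    rw [gaussianReal_zero_var]
    have h : (id : ℝ → ℝ) =ᵐ[Measure.dirac m] fun _ => m := by
      rw [MeasureTheory.ae_dirac_eq]
      exact Filter.eventually_pure.2 rfl
    exact (integrable_const m).congr h.symm
  · rw [gaussianReal_of_var_ne_zero m hv,
      integrable_withDensity_iff (measurable_gaussianPDF m v)
        (Filter.Eventually.of_forall fun x => ENNReal.ofReal_lt_top)]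
    have hv' : (0:ℝ) < (v:ℝ) := by
      have : 0 < v := pos_iff_ne_zero.mpr hv
      exact_mod_cast this
    have hb : (0:ℝ) < (2 * (v:ℝ))⁻¹ := by positivity
    have h1 : Integrable (fun x : ℝ => (x - m) * Real.exp (-(2 * (v:ℝ))⁻¹ * (x - m) ^ 2)) :=
      (integrable_mul_exp_neg_mul_sq hb).comp_sub_right m
    have h2 : Integrable (fun x : ℝ => Real.exp (-(2 * (v:ℝ))⁻¹ * (x - m) ^ 2)) :=
      (integrable_exp_neg_mul_sq hb).comp_sub_right m
    have h3 : Integrable (fun x : ℝ => x * Real.exp (-(2 * (v:ℝ))⁻¹ * (x - m) ^ 2)) := by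
      have := h1.add (h2.const_mul m)
      refine this.congr (Filter.Eventually.of_forall fun x => ?_)
      simp only [Pi.add_apply]; ring
    have h4 := h3.const_mul (Real.sqrt (2 * Real.pi * (v:ℝ)))⁻¹
    refine h4.congr (Filter.Eventually.of_forall fun x => ?_)
    simp only [ProbabilityTheory.gaussianPDF_def, ProbabilityTheory.gaussianPDFReal_def, id]
    rw [ENNReal.toReal_ofReal (by positivity)]
    have h5 : -(x - m) ^ 2 / (2 * (v:ℝ)) = -(2 * (v:ℝ))⁻¹ * (x - m) ^ 2 := by
      rw [div_eq_mul_inv]; ring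
    rw [h5]; ring

lemma integral_id_gaussianReal' (m : ℝ) (v : NNReal) :
    ∫ x, x ∂(gaussianReal m v) = m := by
  have hmap : (gaussianReal m v).map (fun x => -1 * x + 2 * m) = gaussianReal m v := by
    have h1 := ProbabilityTheory.gaussianReal_map_const_mul (μ := m) (v := v) (-1)
    have h2 : (NNReal.mk ((-1:ℝ)^2) (sq_nonneg _) * v : NNReal) = v := by
      ext; norm_num
    rw [h2] at h1
    have h3 := ProbabilityTheory.gaussianReal_map_add_const (μ := -1 * m) (v := v) (2 * m)
    rw [show -1 * m + 2 * m = m by ring] at h3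
    have hc : (fun x : ℝ => -1 * x + 2 * m) = (· + 2 * m) ∘ (fun x : ℝ => -1 * x) := rfl
    rw [hc, ← Measure.map_map (by fun_prop) (by fun_prop), h1, h3]
  have hint := integrable_id_gaussianReal' m v
  have key := integral_map (φ := fun x : ℝ => -1 * x + 2 * m) (μ := gaussianReal m v)
    (f := fun x : ℝ => x) (by fun_prop) aestronglyMeasurable_id
  rw [hmap] at key
  have hI : ∫ x, (-1 * x + 2 * m) ∂(gaussianReal m v)
      = -(∫ x, x ∂(gaussianReal m v)) + 2 * m := by
    have ha : Integrable (fun x : ℝ => -1 * x) (gaussianReal m v) := hint.const_mul (-1)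
    rw [integral_add ha (integrable_const _)]
    simp only [neg_mul, one_mul]
    rw [integral_neg]
    simp
  rw [hI] at key
  linarith

lemma gauss_mean' {Ω : Type*} [MeasurableSpace Ω] {μ : Measure Ω} [IsProbabilityMeasure μ]
    {f : Ω → ℝ} (hf : Measurable f) {m : ℝ} {v : NNReal}
    (h : Measure.map f μ = gaussianReal m v) :
    Integrable f μ ∧ ∫ ω, f ω ∂μ = m := by
  have hint : Integrable f μ := by
    have h2 : Integrable (id : ℝ → ℝ) (Measure.map f μ) := by
      rw [h]; exact integrable_id_gaussianReal' m v
    exact (integrable_map_measure aestronglyMeasurable_id hf.aemeasurable).mp h2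
  refine ⟨hint, ?_⟩
  have := integral_map (φ := f) (μ := μ) (f := fun x : ℝ => x)
    hf.aemeasurable aestronglyMeasurable_id
  rw [h, integral_id_gaussianReal'] at this
  exact this.symm

theorem corrRidge_representation
    {Ω : Type*} [MeasurableSpace Ω] (μ : Measure Ω)
    (hμ : IsProbabilityMeasure μ)
    (n p : ℕ) (hn : 0 < n) (hp : 0 < p)
    (X : Matrix (Fin n) (Fin p) ℝ) (β0 : Fin p → ℝ)
    (σ : ℝ) (hσ : 0 < σ)
    (ε : Ω → Fin n → ℝ) (hεm : ∀ i, Measurable fun ω => ε ω i)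
    (hε : IsGaussianVec μ ε 0 (σ ^ 2 • (1 : Matrix (Fin n) (Fin n) ℝ)))
    (lam : ℝ) (hlam : 0 < lam)
    (PX : Matrix (Fin p) (Fin p) ℝ) (hPX : IsRowProjection n X PX)
    (lmin : ℝ) (hlmin : IsSmallestNonzeroEigenvalue (Sigmahat n X) lmin)
    (hminvar : 0 < OmegaMin n X lam)
    (binit : Ω → Fin p → ℝ) (hbm : ∀ j, Measurable fun ω => binit ω j) :
    IsGaussianVec μ
      (fun ω j => ridge n X lam (X.mulVec β0 + ε ω) j -
        ∫ ω', ridge n X lam (X.mulVec β0 + ε ω') j ∂μ)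
      0 ((σ ^ 2 * (n : ℝ)⁻¹) • OmegaM n X lam) ∧
    ∀ ω (j : Fin p),
      corrRidge n X lam PX (X.mulVec β0 + ε ω) (binit ω) j =
        (ridge n X lam (X.mulVec β0 + ε ω) j -
          ∫ ω', ridge n X lam (X.mulVec β0 + ε ω') j ∂μ) +
        (PX j j * β0 j -
          (∑ k ∈ Finset.univ.erase j, PX j k * (binit ω k - β0 k)) +
          ((∫ ω', ridge n X lam (X.mulVec β0 + ε ω') j ∂μ) - PX.mulVec β0 j)) := by
  classical
  haveI := hμ
  set B := (Sigmahat n X + lam • (1 : Matrix (Fin p) (Fin p) ℝ))⁻¹ with hB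
  set M := B * (((n:ℝ))⁻¹ • Xᵀ) with hM
  have hridge : ∀ Y : Fin n → ℝ, ridge n X lam Y = M.mulVec Y := fun _ => rfl
  have hSsymm : (Sigmahat n X + lam • (1 : Matrix (Fin p) (Fin p) ℝ))ᵀ
      = Sigmahat n X + lam • (1 : Matrix (Fin p) (Fin p) ℝ) := by
    simp [Sigmahat, Matrix.transpose_add, Matrix.transpose_smul, Matrix.transpose_mul,
      Matrix.mul_assoc]
  have hBsymm : Bᵀ = B := by
    rw [hB, Matrix.transpose_nonsing_inv, hSsymm]
  have hMMt : M * Mᵀ = (n:ℝ)⁻¹ • OmegaM n X lam := by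
    rw [hM, Matrix.transpose_mul, Matrix.transpose_smul, Matrix.transpose_transpose, hBsymm]
    simp only [OmegaM]
    rw [← hB]
    simp only [Sigmahat, Matrix.smul_mul, Matrix.mul_smul, smul_smul, Matrix.mul_assoc]
  -- linear combinations of ε are Gaussian
  have hw_meas : ∀ w : Fin n → ℝ, Measurable (fun ω => ∑ i, w i * ε ω i) := fun w =>
    Finset.measurable_sum _ (fun i _ => (hεm i).const_mul (w i))
  have hlin : ∀ w : Fin n → ℝ, Measure.map (fun ω => ∑ i, w i * ε ω i) μ
      = gaussianReal 0 (Real.toNNReal (σ^2 * ∑ i, w i ^ 2)) := by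
    intro w
    have hvar : ∑ i, ∑ k, w i * (σ^2 • (1 : Matrix (Fin n) (Fin n) ℝ)) i k * w k
        = σ^2 * ∑ i, w i ^ 2 := by
      rw [Finset.mul_sum]
      refine Finset.sum_congr rfl fun i _ => ?_
      rw [Finset.sum_eq_single i]
      · simp only [Matrix.smul_apply, Matrix.one_apply_eq, smul_eq_mul]; ring
      · intro k _ hk
        simp [Matrix.smul_apply, Matrix.one_apply_ne' hk]
      · intro h; exact absurd (Finset.mem_univ i) h
    have h := hε w
    simp only [Pi.zero_apply, mul_zero, Finset.sum_const_zero] at h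
    rw [hvar] at h
    exact h
  have hmean : ∀ w : Fin n → ℝ, Integrable (fun ω => ∑ i, w i * ε ω i) μ ∧
      ∫ ω, (∑ i, w i * ε ω i) ∂μ = 0 := fun w => gauss_mean' (hw_meas w) (hlin w)
  -- expectation of the ridge estimator
  have hEr : ∀ j, (∫ ω', ridge n X lam (X.mulVec β0 + ε ω') j ∂μ)
      = M.mulVec (X.mulVec β0) j := by
    intro j
    have hsplit : ∀ ω', ridge n X lam (X.mulVec β0 + ε ω') j
        = M.mulVec (X.mulVec β0) j + ∑ i, M j i * ε ω' i := by
      intro ω'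
      rw [hridge, Matrix.mulVec_add]
      simp only [Pi.add_apply, Matrix.mulVec, dotProduct]
    simp only [hsplit]
    rw [integral_add (integrable_const _) (hmean (fun i => M j i)).1, (hmean _).2,
      integral_const]
    simp
  have hZ : ∀ ω j, ridge n X lam (X.mulVec β0 + ε ω) j -
      (∫ ω', ridge n X lam (X.mulVec β0 + ε ω') j ∂μ) = ∑ i, M j i * ε ω i := by
    intro ω j
    rw [hEr j, hridge, Matrix.mulVec_add]
    simp only [Pi.add_apply, add_sub_cancel_left]
    rfl
  constructor
  · intro u
    set w : Fin n → ℝ := fun i => ∑ j, u j * M j i with hw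
    have heq : (fun ω => ∑ j, u j * (ridge n X lam (X.mulVec β0 + ε ω) j -
        ∫ ω', ridge n X lam (X.mulVec β0 + ε ω') j ∂μ)) = fun ω => ∑ i, w i * ε ω i := by
      funext ω
      simp only [hZ]
      calc ∑ j, u j * ∑ i, M j i * ε ω i
          = ∑ j, ∑ i, u j * (M j i * ε ω i) := by
            refine Finset.sum_congr rfl fun j _ => ?_; rw [Finset.mul_sum]
        _ = ∑ i, ∑ j, u j * (M j i * ε ω i) := Finset.sum_comm
        _ = ∑ i, w i * ε ω i := by
            refine Finset.sum_congr rfl fun i _ => ?_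
            rw [hw, Finset.sum_mul]
            exact Finset.sum_congr rfl fun j _ => by ring
    have hMMt' : ∀ j k, (∑ i, M j i * M k i) = (n:ℝ)⁻¹ * OmegaM n X lam j k := by
      intro j k
      have h := congrFun (congrFun hMMt j) k
      simpa [Matrix.mul_apply, Matrix.transpose_apply, Matrix.smul_apply, smul_eq_mul] using h
    have hvar2 : ∑ j, ∑ k, u j * ((σ ^ 2 * (n : ℝ)⁻¹) • OmegaM n X lam) j k * u k
        = σ^2 * ∑ i, w i ^ 2 := by
      calc ∑ j, ∑ k, u j * ((σ ^ 2 * (n : ℝ)⁻¹) • OmegaM n X lam) j k * u k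
          = ∑ j, ∑ k, σ^2 * ((∑ i, M j i * M k i) * (u j * u k)) := by
            refine Finset.sum_congr rfl fun j _ => Finset.sum_congr rfl fun k _ => ?_
            have hsm : ((σ ^ 2 * (n : ℝ)⁻¹) • OmegaM n X lam) j k
                = σ^2 * ((n:ℝ)⁻¹ * OmegaM n X lam j k) := by
              simp [Matrix.smul_apply, smul_eq_mul]; ring
            rw [hsm, ← hMMt' j k]; ring
        _ = σ^2 * ∑ j, ∑ k, (∑ i, M j i * M k i) * (u j * u k) := by
            rw [Finset.mul_sum]
            exact Finset.sum_congr rfl fun j _ => (Finset.mul_sum _ _ _).symm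
        _ = σ^2 * ∑ i, w i ^ 2 := by
            congr 1
            calc ∑ j, ∑ k, (∑ i, M j i * M k i) * (u j * u k)
                = ∑ j, ∑ k, ∑ i, (u j * M j i) * (u k * M k i) := by
                  refine Finset.sum_congr rfl fun j _ => Finset.sum_congr rfl fun k _ => ?_
                  rw [Finset.sum_mul]
                  exact Finset.sum_congr rfl fun i _ => by ring
              _ = ∑ j, ∑ i, ∑ k, (u j * M j i) * (u k * M k i) := by
                  exact Finset.sum_congr rfl fun j _ => Finset.sum_comm
              _ = ∑ i, ∑ j, ∑ k, (u j * M j i) * (u k * M k i) := Finset.sum_comm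
              _ = ∑ i, w i ^ 2 := by
                  refine Finset.sum_congr rfl fun i _ => ?_
                  rw [hw, sq]
                  exact (Finset.sum_mul_sum _ _ _ _).symm
    rw [heq, hlin w]
    have h0 : (∑ j, u j * (0 : Fin p → ℝ) j) = 0 := by simp
    rw [h0, hvar2]
  · intro ω j
    simp only [corrRidge]
    have h1 : PX.mulVec β0 j = PX j j * β0 j + ∑ k ∈ Finset.univ.erase j, PX j k * β0 k := by
      simp only [Matrix.mulVec, dotProduct]
      exact (Finset.add_sum_erase _ _ (Finset.mem_univ j)).symm
    have h2 : ∑ k ∈ Finset.univ.erase j, PX j k * (binit ω k - β0 k)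
        = (∑ k ∈ Finset.univ.erase j, PX j k * binit ω k)
          - ∑ k ∈ Finset.univ.erase j, PX j k * β0 k := by
      rw [← Finset.sum_sub_distrib]
      exact Finset.sum_congr rfl fun k _ => by ring
    rw [h1, h2]
    ring

end PaperRidge
end
end
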